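/- For any solution of the Wainwright–Hsu equations for class A vacuum Bianchi models that is not of type IX (i.e., not all three Nᵢ have the same strict sign), the constraint implies Σ₊² + Σ₋² ≤ 1 at every time, and hence the maximal existence interval of the solution is all of ℝ. -/

import Mathlib

noncomputable def qq (Sp Sm : ℝ → ℝ) (τ : ℝ) : ℝ := 2 * (Sp τ ^ 2 + Sm τ ^ 2)

noncomputable def Spl (N1 N2 N3 : ℝ → ℝ) (τ : ℝ) : ℝ :=
  (1 / 2) * ((N2 τ - N3 τ) ^ 2 - N1 τ * (2 * N1 τ - N2 τ - N3 τ))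

noncomputable def Smi (N1 N2 N3 : ℝ → ℝ) (τ : ℝ) : ℝ :=
  (Real.sqrt 3 / 2) * ((N3 τ - N2 τ) * (N1 τ - N2 τ - N3 τ))

/-- The Wainwright–Hsu vacuum constraint. -/
def Constraint (N1 N2 N3 Sp Sm : ℝ → ℝ) (τ : ℝ) : Prop :=
  Sp τ ^ 2 + Sm τ ^ 2 +
      (3 / 4) * (N1 τ ^ 2 + N2 τ ^ 2 + N3 τ ^ 2 -
        2 * (N1 τ * N2 τ + N2 τ * N3 τ + N3 τ * N1 τ)) = 1

/-- `(N1, N2, N3, Sp, Sm)` solves the Wainwright–Hsu system (with constraint) on `S`. -/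
def IsWHSolutionOn (N1 N2 N3 Sp Sm : ℝ → ℝ) (S : Set ℝ) : Prop :=
  ∀ τ ∈ S,
    HasDerivAt N1 ((qq Sp Sm τ - 4 * Sp τ) * N1 τ) τ ∧
    HasDerivAt N2 ((qq Sp Sm τ + 2 * Sp τ + 2 * Real.sqrt 3 * Sm τ) * N2 τ) τ ∧
    HasDerivAt N3 ((qq Sp Sm τ + 2 * Sp τ - 2 * Real.sqrt 3 * Sm τ) * N3 τ) τ ∧
    HasDerivAt Sp (-(2 - qq Sp Sm τ) * Sp τ - 3 * Spl N1 N2 N3 τ) τ ∧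
    HasDerivAt Sm (-(2 - qq Sp Sm τ) * Sm τ - 3 * Smi N1 N2 N3 τ) τ ∧
    Constraint N1 N2 N3 Sp Sm τ

section Aux

open Set Metric intervalIntegral MeasureTheory

/-- Solutions of scalar linear ODEs have an exponential representation. -/
lemma lin_rep {s : Set ℝ} (hs : IsOpen s) (hconv : Convex ℝ s) {t0 : ℝ} (ht0 : t0 ∈ s)
    {w ρ : ℝ → ℝ} (hw : ∀ τ ∈ s, HasDerivAt w (ρ τ * w τ) τ)
    (hρ : ContinuousOn ρ s) :
    ∀ τ ∈ s, w τ = w t0 * Real.exp (∫ u in t0..τ, ρ u) := by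
  have hord : s.OrdConnected := hconv.ordConnected
  have hA : ∀ τ ∈ s, HasDerivAt (fun t => ∫ u in t0..t, ρ u) (ρ τ) τ := by
    intro τ hτ
    refine integral_hasDerivAt_right ?_ (hρ.stronglyMeasurableAtFilter hs τ hτ)
      (hρ.continuousAt (hs.mem_nhds hτ))
    exact (hρ.mono (hord.uIcc_subset ht0 hτ)).intervalIntegrable
  set A : ℝ → ℝ := fun t => ∫ u in t0..t, ρ u with hAdef
  have hh : ∀ τ ∈ s, HasDerivWithinAt (fun t => w t * Real.exp (-A t)) 0 s τ := by
    intro τ hτ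
    have : HasDerivAt (fun t => w t * Real.exp (-A t))
        (ρ τ * w τ * Real.exp (-A τ) + w τ * (Real.exp (-A τ) * -ρ τ)) τ :=
      (hw τ hτ).mul (((hA τ hτ).neg).exp)
    have h0 : ρ τ * w τ * Real.exp (-A τ) + w τ * (Real.exp (-A τ) * -ρ τ) = 0 := by ring
    rw [h0] at this
    exact this.hasDerivWithinAt
  have hconst : ∀ τ ∈ s, w τ * Real.exp (-A τ) = w t0 * Real.exp (-A t0) := by
    intro τ hτ
    have := hconv.norm_image_sub_le_of_norm_hasDerivWithin_le (C := 0) hh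
      (fun x _ => by simp) ht0 hτ
    simpa [sub_eq_zero] using this
  intro τ hτ
  have h1 := hconst τ hτ
  have h2 : A t0 = 0 := by simp [hAdef]
  rw [h2] at h1
  have hne : Real.exp (-A τ) ≠ 0 := Real.exp_ne_zero _
  field_simp [Real.exp_neg] at h1 ⊢
  have h3 : Real.exp (-A τ) * Real.exp (A τ) = 1 := by rw [← Real.exp_add]; simp
  have h4 : w τ = w τ * Real.exp (-A τ) * Real.exp (A τ) := by rw [mul_assoc, h3, mul_one]
  rw [h4, h1]
  simp [hAdef]

/-- Picard–Lindelöf existence, also recording that the solution stays in the closed ball. -/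
theorem exists_solution_mem {E : Type*} [NormedAddCommGroup E] [NormedSpace ℝ E] [CompleteSpace E]
    {v : ℝ → E → E} {tMin tMax : ℝ} {t₀ : Icc tMin tMax} (x₀ : E) {a L K : NNReal}
    (hpl : IsPicardLindelof v t₀ x₀ a 0 L K) :
    ∃ f : ℝ → E, f t₀ = x₀ ∧ (∀ t, f t ∈ closedBall x₀ a) ∧
      ∀ t ∈ Icc tMin tMax, HasDerivWithinAt f (v t (f t)) (Icc tMin tMax) t := by
  have hx : x₀ ∈ closedBall x₀ ((0 : NNReal) : ℝ) := mem_closedBall_self le_rfl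
  obtain ⟨α, hα⟩ := ODE.FunSpace.exists_isFixedPt_next hpl hx
  refine ⟨α.compProj, ?_, fun t => α.compProj_mem_closedBall hpl.mul_max_le, fun t ht => ?_⟩
  · rw [ODE.FunSpace.compProj_val, ← hα, ODE.FunSpace.next_apply₀]
  · apply ODE.hasDerivWithinAt_picard_Icc t₀.2 hpl.continuousOn_uncurry
      α.continuous_compProj.continuousOn (fun _ ht' => α.compProj_mem_closedBall hpl.mul_max_le)
      x₀ ht |>.congr_of_mem _ ht
    intro t' ht'
    have := congrFun (congrArg ODE.FunSpace.toFun hα) ⟨t', ht'⟩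
    rw [ODE.FunSpace.compProj_of_mem ht']
    exact this.symm

abbrev EE : Type := ℝ × ℝ × ℝ × ℝ × ℝ

/-- The Wainwright–Hsu vector field on `ℝ⁵`. -/
noncomputable def vf : EE → EE := fun x =>
  ((2 * (x.2.2.2.1 ^ 2 + x.2.2.2.2 ^ 2) - 4 * x.2.2.2.1) * x.1,
   (2 * (x.2.2.2.1 ^ 2 + x.2.2.2.2 ^ 2) + 2 * x.2.2.2.1 + 2 * Real.sqrt 3 * x.2.2.2.2) * x.2.1,
   (2 * (x.2.2.2.1 ^ 2 + x.2.2.2.2 ^ 2) + 2 * x.2.2.2.1 - 2 * Real.sqrt 3 * x.2.2.2.2) * x.2.2.1,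
   -(2 - 2 * (x.2.2.2.1 ^ 2 + x.2.2.2.2 ^ 2)) * x.2.2.2.1 -
     3 * ((1 / 2) * ((x.2.1 - x.2.2.1) ^ 2 - x.1 * (2 * x.1 - x.2.1 - x.2.2.1))),
   -(2 - 2 * (x.2.2.2.1 ^ 2 + x.2.2.2.2 ^ 2)) * x.2.2.2.2 -
     3 * ((Real.sqrt 3 / 2) * ((x.2.2.1 - x.2.1) * (x.1 - x.2.1 - x.2.2.1))))

lemma vf_contDiff : ContDiff ℝ 1 vf := by
  unfold vf
  fun_prop

lemma hasDerivAt_fst' {A B : Type*} [NormedAddCommGroup A] [NormedSpace ℝ A]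
    [NormedAddCommGroup B] [NormedSpace ℝ B] {g : ℝ → A × B} {d : A × B} {t : ℝ}
    (h : HasDerivAt g d t) : HasDerivAt (fun s => (g s).1) d.1 t := by
  simpa using h.hasFDerivAt.fst.hasDerivAt

lemma hasDerivAt_snd' {A B : Type*} [NormedAddCommGroup A] [NormedSpace ℝ A]
    [NormedAddCommGroup B] [NormedSpace ℝ B] {g : ℝ → A × B} {d : A × B} {t : ℝ}
    (h : HasDerivAt g d t) : HasDerivAt (fun s => (g s).2) d.2 t := by
  simpa using h.hasFDerivAt.snd.hasDerivAt

/-- Uniform Picard–Lindelöf data for `vf` near any point of norm at most `R`. -/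
lemma pl_vf {R C : ℝ} {L : NNReal} (hC1 : 1 ≤ C)
    (hL : LipschitzOnWith L vf (closedBall 0 (R + 1)))
    (hCb : ∀ x ∈ closedBall (0 : EE) (R + 1), ‖vf x‖ ≤ C)
    {x₀ : EE} (hx₀ : ‖x₀‖ ≤ R) (t₀ : ℝ) :
    IsPicardLindelof (fun _ => vf) (tmin := t₀ - 1 / C) (tmax := t₀ + 1 / C)
      ⟨t₀, by constructor <;> linarith [one_div_pos.2 (lt_of_lt_of_le one_pos hC1)]⟩
      x₀ 1 0 C.toNNReal L := by
  have hC0 : (0 : ℝ) < C := lt_of_lt_of_le one_pos hC1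
  have hsub : closedBall x₀ 1 ⊆ closedBall (0 : EE) (R + 1) := by
    intro y hy
    rw [mem_closedBall] at hy ⊢
    calc dist y 0 ≤ dist y x₀ + dist x₀ 0 := dist_triangle _ _ _
      _ ≤ 1 + R := by rw [dist_zero_right]; linarith
      _ = R + 1 := by ring
  refine ⟨?_, ?_, ?_, ?_⟩
  · exact fun t _ => hL.mono (by simpa using hsub)
  · exact fun x _ => continuousOn_const
  · intro t _ x hx
    rw [Real.coe_toNNReal _ hC0.le]
    exact hCb x (hsub (by simpa using hx))
  · have : max (t₀ + 1 / C - t₀) (t₀ - (t₀ - 1 / C)) = 1 / C := by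
      simp
    simp only [Real.coe_toNNReal _ hC0.le, NNReal.coe_one, NNReal.coe_zero, sub_zero]
    rw [this, mul_one_div, div_self (ne_of_gt hC0)]

/-- There exist Lipschitz and bound constants for `vf` on any closed ball. -/
lemma vf_const (R : ℝ) : ∃ (C : ℝ) (L : NNReal), 1 ≤ C ∧
    LipschitzOnWith L vf (closedBall 0 (R + 1)) ∧
    ∀ x ∈ closedBall (0 : EE) (R + 1), ‖vf x‖ ≤ C := by
  have hcomp : IsCompact (closedBall (0 : EE) (R + 1)) := isCompact_closedBall _ _
  have hcont : Continuous vf := vf_contDiff.continuous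
  obtain ⟨c, hc⟩ := hcomp.exists_bound_of_continuousOn hcont.continuousOn
  have hfd : Continuous fun x => fderiv ℝ vf x := vf_contDiff.continuous_fderiv one_ne_zero
  obtain ⟨l, hl⟩ := hcomp.exists_bound_of_continuousOn (hfd.norm.continuousOn)
  refine ⟨max c 1, ⟨max l 0, le_max_right _ _⟩, le_max_right _ _, ?_, ?_⟩
  · refine (convex_closedBall _ _).lipschitzOnWith_of_nnnorm_fderiv_le
      (fun x _ => vf_contDiff.differentiable one_ne_zero x) (fun x hx => ?_)
    have := hl x hx
    simp only [Real.norm_eq_abs, abs_norm] at this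
    show ((‖fderiv ℝ vf x‖₊ : NNReal) : ℝ) ≤ max l 0
    rw [coe_nnnorm]
    exact le_trans this (le_max_left _ _)
  · exact fun x hx => le_trans (hc x hx) (le_max_left _ _)

/-- The Wainwright–Hsu constraint is preserved along solutions of `vf`. -/
lemma constraint_prop {U : Set ℝ} (hU : IsOpen U) (hUc : Convex ℝ U) {t1 : ℝ} (ht1 : t1 ∈ U)
    {g : ℝ → EE} (hg : ∀ t ∈ U, HasDerivAt g (vf (g t)) t)
    (hcon0 : (g t1).2.2.2.1 ^ 2 + (g t1).2.2.2.2 ^ 2 +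
      (3 / 4) * ((g t1).1 ^ 2 + (g t1).2.1 ^ 2 + (g t1).2.2.1 ^ 2 -
        2 * ((g t1).1 * (g t1).2.1 + (g t1).2.1 * (g t1).2.2.1 + (g t1).2.2.1 * (g t1).1)) = 1) :
    ∀ τ ∈ U, (g τ).2.2.2.1 ^ 2 + (g τ).2.2.2.2 ^ 2 +
      (3 / 4) * ((g τ).1 ^ 2 + (g τ).2.1 ^ 2 + (g τ).2.2.1 ^ 2 -
        2 * ((g τ).1 * (g τ).2.1 + (g τ).2.1 * (g τ).2.2.1 + (g τ).2.2.1 * (g τ).1)) = 1 := by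
  have hcomp : ∀ t ∈ U,
      HasDerivAt (fun s => (g s).1) ((vf (g t)).1) t ∧
      HasDerivAt (fun s => (g s).2.1) ((vf (g t)).2.1) t ∧
      HasDerivAt (fun s => (g s).2.2.1) ((vf (g t)).2.2.1) t ∧
      HasDerivAt (fun s => (g s).2.2.2.1) ((vf (g t)).2.2.2.1) t ∧
      HasDerivAt (fun s => (g s).2.2.2.2) ((vf (g t)).2.2.2.2) t := by
    intro t ht
    have h := hg t ht
    exact ⟨hasDerivAt_fst' h, hasDerivAt_fst' (hasDerivAt_snd' h),
      hasDerivAt_fst' (hasDerivAt_snd' (hasDerivAt_snd' h)),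
      hasDerivAt_fst' (hasDerivAt_snd' (hasDerivAt_snd' (hasDerivAt_snd' h))),
      hasDerivAt_snd' (hasDerivAt_snd' (hasDerivAt_snd' (hasDerivAt_snd' h)))⟩
  set w : ℝ → ℝ := fun s => (g s).2.2.2.1 ^ 2 + (g s).2.2.2.2 ^ 2 +
      (3 / 4) * ((g s).1 ^ 2 + (g s).2.1 ^ 2 + (g s).2.2.1 ^ 2 -
        2 * ((g s).1 * (g s).2.1 + (g s).2.1 * (g s).2.2.1 + (g s).2.2.1 * (g s).1)) - 1
    with hwdef
  set ρ : ℝ → ℝ := fun s => 4 * ((g s).2.2.2.1 ^ 2 + (g s).2.2.2.2 ^ 2) with hρdef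
  have hwd : ∀ t ∈ U, HasDerivAt w (ρ t * w t) t := by
    intro t ht
    obtain ⟨h1, h2, h3, h4, h5⟩ := hcomp t ht
    have hbig := (((h4.pow 2).add (h5.pow 2)).add
      (((((h1.pow 2).add (h2.pow 2)).add (h3.pow 2)).sub
        ((((h1.mul h2).add (h2.mul h3)).add (h3.mul h1)).const_mul 2)).const_mul
          (3 / 4))).sub_const 1
    have heq : ρ t * w t =
        (2 : ℕ) * (g t).2.2.2.1 ^ (2 - 1) * (vf (g t)).2.2.2.1 +
          (2 : ℕ) * (g t).2.2.2.2 ^ (2 - 1) * (vf (g t)).2.2.2.2 +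
        3 / 4 * ((2 : ℕ) * (g t).1 ^ (2 - 1) * (vf (g t)).1 +
            (2 : ℕ) * (g t).2.1 ^ (2 - 1) * (vf (g t)).2.1 +
            (2 : ℕ) * (g t).2.2.1 ^ (2 - 1) * (vf (g t)).2.2.1 -
          2 * ((vf (g t)).1 * (g t).2.1 + (g t).1 * (vf (g t)).2.1 +
            ((vf (g t)).2.1 * (g t).2.2.1 + (g t).2.1 * (vf (g t)).2.2.1) +
            ((vf (g t)).2.2.1 * (g t).1 + (g t).2.2.1 * (vf (g t)).1))) := by
      simp only [hwdef, hρdef, vf]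
      push_cast
      ring
    rw [hwdef, hρdef] at *
    rw [heq]
    convert hbig using 2
    all_goals rfl
  have hρc : ContinuousOn ρ U := by
    intro t ht
    obtain ⟨-, -, -, h4, h5⟩ := hcomp t ht
    have hco : ContinuousAt (fun s => 4 * ((g s).2.2.2.1 ^ 2 + (g s).2.2.2.2 ^ 2)) t :=
      ((h4.continuousAt.pow 2).add (h5.continuousAt.pow 2)).const_mul 4
    rw [hρdef]
    exact hco.continuousWithinAt
  have hrep := lin_rep hU hUc ht1 hwd hρc
  have hw0 : w t1 = 0 := by rw [hwdef]; simp only; linarith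
  intro τ hτ
  have h2 := hrep τ hτ
  rw [hw0, zero_mul] at h2
  have h3 : w τ = 0 := h2
  rw [hwdef] at h3
  simp only at h3
  linarith

end Aux

set_option maxHeartbeats 2000000 in
/-- For a non-type-IX solution of the Wainwright–Hsu system, the constraint forces
`Σ₊² + Σ₋² ≤ 1` at every time, and a maximal such solution is defined on all of `ℝ`. -/
theorem stmt_6 (N1 N2 N3 Sp Sm : ℝ → ℝ) (I : Set ℝ)
    (hopen : IsOpen I) (hconn : IsPreconnected I) (h0 : (0 : ℝ) ∈ I)
    (hsol : IsWHSolutionOn N1 N2 N3 Sp Sm I)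
    (hnotIX : ¬ ((0 < N1 0 ∧ 0 < N2 0 ∧ 0 < N3 0) ∨
      (N1 0 < 0 ∧ N2 0 < 0 ∧ N3 0 < 0)))
    (hmax : ∀ (J : Set ℝ) (M1 M2 M3 P Q : ℝ → ℝ), IsOpen J → IsPreconnected J →
      I ⊆ J → IsWHSolutionOn M1 M2 M3 P Q J →
      (∀ τ ∈ I, M1 τ = N1 τ ∧ M2 τ = N2 τ ∧ M3 τ = N3 τ ∧ P τ = Sp τ ∧ Q τ = Sm τ) →
      J = I) :
    (∀ τ ∈ I, Sp τ ^ 2 + Sm τ ^ 2 ≤ 1) ∧ I = Set.univ := by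
  have hord : I.OrdConnected := hconn.ordConnected
  have hconv : Convex ℝ I := by
    rw [convex_iff_ordConnected]; exact hord
  have hSpc : ∀ τ ∈ I, ContinuousAt Sp τ := fun τ hτ => ((hsol τ hτ).2.2.2.1).continuousAt
  have hSmc : ∀ τ ∈ I, ContinuousAt Sm τ := fun τ hτ => ((hsol τ hτ).2.2.2.2.1).continuousAt
  have hqc : ∀ τ ∈ I, ContinuousAt (fun u => qq Sp Sm u) τ := by
    intro τ hτ
    have h1 := hSpc τ hτ; have h2 := hSmc τ hτ
    simp only [qq]
    exact ((h1.pow 2).add (h2.pow 2)).const_mul 2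
  have ha1c : ContinuousOn (fun u => qq Sp Sm u - 4 * Sp u) I :=
    fun τ hτ => (((hqc τ hτ).sub ((hSpc τ hτ).const_mul 4)).continuousWithinAt)
  have ha2c : ContinuousOn (fun u => qq Sp Sm u + 2 * Sp u + 2 * Real.sqrt 3 * Sm u) I :=
    fun τ hτ => ((((hqc τ hτ).add ((hSpc τ hτ).const_mul 2)).add
      ((hSmc τ hτ).const_mul (2 * Real.sqrt 3))).continuousWithinAt)
  have ha3c : ContinuousOn (fun u => qq Sp Sm u + 2 * Sp u - 2 * Real.sqrt 3 * Sm u) I :=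
    fun τ hτ => ((((hqc τ hτ).add ((hSpc τ hτ).const_mul 2)).sub
      ((hSmc τ hτ).const_mul (2 * Real.sqrt 3))).continuousWithinAt)
  have hrep1 : ∀ τ ∈ I, N1 τ = N1 0 * Real.exp (∫ u in (0:ℝ)..τ, (qq Sp Sm u - 4 * Sp u)) :=
    lin_rep hopen hconv h0 (fun τ hτ => (hsol τ hτ).1) ha1c
  have hrep2 : ∀ τ ∈ I, N2 τ = N2 0 *
      Real.exp (∫ u in (0:ℝ)..τ, (qq Sp Sm u + 2 * Sp u + 2 * Real.sqrt 3 * Sm u)) :=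
    lin_rep hopen hconv h0 (fun τ hτ => (hsol τ hτ).2.1) ha2c
  have hrep3 : ∀ τ ∈ I, N3 τ = N3 0 *
      Real.exp (∫ u in (0:ℝ)..τ, (qq Sp Sm u + 2 * Sp u - 2 * Real.sqrt 3 * Sm u)) :=
    lin_rep hopen hconv h0 (fun τ hτ => (hsol τ hτ).2.2.1) ha3c
  have hkey : ∀ x y A B : ℝ, x * y ≤ 0 → x * Real.exp A * (y * Real.exp B) ≤ 0 := by
    intro x y A B h
    have h1 : 0 < Real.exp A * Real.exp B := mul_pos (Real.exp_pos A) (Real.exp_pos B)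
    nlinarith
  have hprod0 : N1 0 * N2 0 ≤ 0 ∨ N2 0 * N3 0 ≤ 0 ∨ N3 0 * N1 0 ≤ 0 := by
    by_contra hc
    push_neg at hc
    obtain ⟨h12, h23, h31⟩ := hc
    rcases lt_trichotomy (N1 0) 0 with h|h|h
    · exact hnotIX (Or.inr ⟨h, by nlinarith, by nlinarith⟩)
    · rw [h, zero_mul] at h12; exact lt_irrefl 0 h12
    · exact hnotIX (Or.inl ⟨h, by nlinarith, by nlinarith⟩)
  have hQ : ∀ τ ∈ I, Sp τ ^ 2 + Sm τ ^ 2 ≤ 1 := by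
    intro τ hτ
    have hcon := (hsol τ hτ).2.2.2.2.2
    simp only [Constraint] at hcon
    rcases hprod0 with h|h|h
    · have h12 : N1 τ * N2 τ ≤ 0 := by
        rw [hrep1 τ hτ, hrep2 τ hτ]; exact hkey _ _ _ _ h
      nlinarith [sq_nonneg (N1 τ + N2 τ - N3 τ)]
    · have h23 : N2 τ * N3 τ ≤ 0 := by
        rw [hrep2 τ hτ, hrep3 τ hτ]; exact hkey _ _ _ _ h
      nlinarith [sq_nonneg (N2 τ + N3 τ - N1 τ)]
    · have h31 : N3 τ * N1 τ ≤ 0 := by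
        rw [hrep3 τ hτ, hrep1 τ hτ]; exact hkey _ _ _ _ h
      nlinarith [sq_nonneg (N3 τ + N1 τ - N2 τ)]
  refine ⟨hQ, ?_⟩
  have hfcd : ∀ τ ∈ I, HasDerivAt (fun τ => ((N1 τ, N2 τ, N3 τ, Sp τ, Sm τ) : EE))
      (vf ((N1 τ, N2 τ, N3 τ, Sp τ, Sm τ) : EE)) τ := by
    intro τ hτ
    obtain ⟨hd1, hd2, hd3, hd4, hd5, -⟩ := hsol τ hτ
    exact hd1.prodMk (hd2.prodMk (hd3.prodMk (hd4.prodMk hd5)))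
  set fc : ℝ → EE := fun τ => ((N1 τ, N2 τ, N3 τ, Sp τ, Sm τ) : EE) with hfcdef
  have hext : ∀ T : ℝ, 0 < T → ∃ ε : ℝ, 0 < ε ∧ ε ≤ 1 ∧
      ∀ t1 ∈ I, |t1| + 2 ≤ T → Set.Ioo (t1 - ε) (t1 + ε) ⊆ I := by
    intro T hT
    set R : ℝ := (|N1 0| + |N2 0| + |N3 0|) * Real.exp (10 * T) + 1 with hRdef
    have hint : ∀ τ ∈ I, ∀ (aa : ℝ → ℝ), (∀ x ∈ I, |aa x| ≤ 10) →
        |∫ u in (0:ℝ)..τ, aa u| ≤ 10 * |τ| := by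
      intro τ hτ aa haa
      have h := intervalIntegral.norm_integral_le_of_norm_le_const (C := 10) (f := aa)
        (a := 0) (b := τ) ?_
      · simpa using h
      · intro x hx
        have hxI : x ∈ I := hord.uIcc_subset h0 hτ (Set.uIoc_subset_uIcc hx)
        simpa using haa x hxI
    have hsq3 := Real.sq_sqrt (show (0:ℝ) ≤ 3 by norm_num)
    have hs3n := Real.sqrt_nonneg 3
    have habs1 : ∀ x ∈ I, |Sp x| ≤ 1 ∧ |Sm x| ≤ 1 := by
      intro x hx
      have h1 := hQ x hx
      constructor
      · rw [abs_le]
        constructor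
        · nlinarith [sq_nonneg (Sp x + 1), sq_nonneg (Sm x)]
        · nlinarith [sq_nonneg (Sp x - 1), sq_nonneg (Sm x)]
      · rw [abs_le]
        constructor
        · nlinarith [sq_nonneg (Sm x + 1), sq_nonneg (Sp x)]
        · nlinarith [sq_nonneg (Sm x - 1), sq_nonneg (Sp x)]
    have hcoef : ∀ x ∈ I,
        |qq Sp Sm x - 4 * Sp x| ≤ 10 ∧
        |qq Sp Sm x + 2 * Sp x + 2 * Real.sqrt 3 * Sm x| ≤ 10 ∧
        |qq Sp Sm x + 2 * Sp x - 2 * Real.sqrt 3 * Sm x| ≤ 10 := by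
      intro x hx
      have h1 := hQ x hx
      obtain ⟨hp, hm⟩ := habs1 x hx
      obtain ⟨hplb, hpub⟩ := abs_le.1 hp
      obtain ⟨hmlb, hmub⟩ := abs_le.1 hm
      have hs : Real.sqrt 3 ≤ 7/4 := by nlinarith [sq_nonneg (Real.sqrt 3 - 2)]
      have hsm1 : Real.sqrt 3 * Sm x ≤ 7/4 := by nlinarith
      have hsm2 : -(7/4) ≤ Real.sqrt 3 * Sm x := by nlinarith
      simp only [qq]
      refine ⟨abs_le.2 ⟨by nlinarith, by nlinarith⟩,
        abs_le.2 ⟨by nlinarith, by nlinarith⟩, abs_le.2 ⟨by nlinarith, by nlinarith⟩⟩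
    have hbnd : ∀ τ ∈ I, |τ| ≤ T → ‖fc τ‖ ≤ R := by
      intro τ hτ hτT
      have h1 := hint τ hτ _ (fun x hx => (hcoef x hx).1)
      have h2 := hint τ hτ _ (fun x hx => (hcoef x hx).2.1)
      have h3 := hint τ hτ _ (fun x hx => (hcoef x hx).2.2)
      have hexpm : Real.exp (10 * |τ|) ≤ Real.exp (10 * T) :=
        Real.exp_le_exp.2 (by nlinarith [abs_nonneg τ])
      have hN1 : |N1 τ| ≤ |N1 0| * Real.exp (10 * T) := by
        rw [hrep1 τ hτ, abs_mul, Real.abs_exp]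
        refine mul_le_mul_of_nonneg_left (le_trans (Real.exp_le_exp.2 ?_) hexpm) (abs_nonneg _)
        exact le_trans (le_abs_self _) h1
      have hN2 : |N2 τ| ≤ |N2 0| * Real.exp (10 * T) := by
        rw [hrep2 τ hτ, abs_mul, Real.abs_exp]
        refine mul_le_mul_of_nonneg_left (le_trans (Real.exp_le_exp.2 ?_) hexpm) (abs_nonneg _)
        exact le_trans (le_abs_self _) h2
      have hN3 : |N3 τ| ≤ |N3 0| * Real.exp (10 * T) := by
        rw [hrep3 τ hτ, abs_mul, Real.abs_exp]
        refine mul_le_mul_of_nonneg_left (le_trans (Real.exp_le_exp.2 ?_) hexpm) (abs_nonneg _)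
        exact le_trans (le_abs_self _) h3
      obtain ⟨hp, hm⟩ := habs1 τ hτ
      have e1 : (0:ℝ) ≤ |N1 0| * Real.exp (10 * T) :=
        mul_nonneg (abs_nonneg _) (Real.exp_pos _).le
      have e2 : (0:ℝ) ≤ |N2 0| * Real.exp (10 * T) :=
        mul_nonneg (abs_nonneg _) (Real.exp_pos _).le
      have e3 : (0:ℝ) ≤ |N3 0| * Real.exp (10 * T) :=
        mul_nonneg (abs_nonneg _) (Real.exp_pos _).le
      have hfcn : ‖fc τ‖ = max |N1 τ| (max |N2 τ| (max |N3 τ| (max |Sp τ| |Sm τ|))) := by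
        simp [hfcdef, Prod.norm_def, Real.norm_eq_abs]
      rw [hfcn]
      simp only [max_le_iff, hRdef]
      refine ⟨by nlinarith, by nlinarith, by nlinarith, by nlinarith, by nlinarith⟩
    obtain ⟨C, L, hC1, hL, hCb⟩ := vf_const R
    have hC0 : (0:ℝ) < C := lt_of_lt_of_le one_pos hC1
    refine ⟨1 / C, by positivity, (div_le_one hC0).2 hC1, ?_⟩
    intro t1 ht1 hT1
    set ε : ℝ := 1 / C with hεdef
    have hεpos : 0 < ε := by positivity
    have hε1 : ε ≤ 1 := (div_le_one hC0).2 hC1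
    have habs_t1 : |t1| ≤ T := by linarith
    have hx1 : ‖fc t1‖ ≤ R := hbnd t1 ht1 habs_t1
    have hPL := pl_vf hC1 hL hCb hx1 t1
    obtain ⟨g, hg0, hgmem, hgd⟩ := exists_solution_mem (fc t1) hPL
    have hgD : ∀ t ∈ Set.Ioo (t1 - ε) (t1 + ε), HasDerivAt g (vf (g t)) t := fun t ht =>
      (hgd t (Set.Ioo_subset_Icc_self ht)).hasDerivAt (Icc_mem_nhds ht.1 ht.2)
    have hfball : ∀ t ∈ I, t ∈ Set.Ioo (t1 - ε) (t1 + ε) →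
        fc t ∈ Metric.closedBall (0 : EE) (R + 1) := by
      intro t htI hto
      rw [Metric.mem_closedBall, dist_zero_right]
      have : |t| ≤ T := by
        obtain ⟨h1, h2⟩ := hto
        obtain ⟨ha', hb'⟩ := abs_le.1 (show |t1| ≤ T - 2 by linarith)
        rw [abs_le]
        exact ⟨by linarith, by linarith⟩
      linarith [hbnd t htI this]
    have hgball : ∀ t, g t ∈ Metric.closedBall (0 : EE) (R + 1) := by
      intro t
      have := hgmem t
      simp only [NNReal.coe_one] at this
      rw [Metric.mem_closedBall] at this ⊢
      calc dist (g t) 0 ≤ dist (g t) (fc t1) + dist (fc t1) 0 := dist_triangle _ _ _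
        _ ≤ 1 + R := by rw [dist_zero_right]; linarith
        _ = R + 1 := by ring
    have huniq : ∀ τ ∈ I ∩ Set.Ioo (t1 - ε) (t1 + ε), fc τ = g τ := by
      intro τ hτm
      obtain ⟨hτI, hτo⟩ := hτm
      rcases le_total t1 τ with hle | hle
      · have hsub : Set.Icc t1 τ ⊆ I ∩ Set.Ioo (t1 - ε) (t1 + ε) := by
          intro x hx
          exact ⟨hord.out ht1 hτI ⟨hx.1, hx.2⟩,
            ⟨by linarith [hx.1], lt_of_le_of_lt hx.2 hτo.2⟩⟩
        have := ODE_solution_unique_of_mem_Icc_right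
          (v := fun _ => vf) (s := fun _ => Metric.closedBall (0 : EE) (R + 1)) (K := L)
          (fun _ _ => hL)
          (fun x hx => ((hfcd x (hsub hx).1).continuousAt.continuousWithinAt))
          (fun x hx => (hfcd x (hsub (Set.Ico_subset_Icc_self hx)).1).hasDerivWithinAt)
          (fun x hx => hfball x (hsub (Set.Ico_subset_Icc_self hx)).1
            (hsub (Set.Ico_subset_Icc_self hx)).2)
          (fun x hx => ((hgD x (hsub hx).2).continuousAt.continuousWithinAt))
          (fun x hx => (hgD x (hsub (Set.Ico_subset_Icc_self hx)).2).hasDerivWithinAt)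
          (fun x hx => hgball x)
          hg0.symm
        exact this ⟨hle, le_refl τ⟩
      · have hsub : Set.Icc τ t1 ⊆ I ∩ Set.Ioo (t1 - ε) (t1 + ε) := by
          intro x hx
          exact ⟨hord.out hτI ht1 ⟨hx.1, hx.2⟩,
            ⟨lt_of_lt_of_le hτo.1 hx.1, by linarith [hx.2]⟩⟩
        have := ODE_solution_unique_of_mem_Icc_left
          (v := fun _ => vf) (s := fun _ => Metric.closedBall (0 : EE) (R + 1)) (K := L)
          (fun _ _ => hL)
          (fun x hx => ((hfcd x (hsub hx).1).continuousAt.continuousWithinAt))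
          (fun x hx => (hfcd x (hsub (Set.Ioc_subset_Icc_self hx)).1).hasDerivWithinAt)
          (fun x hx => hfball x (hsub (Set.Ioc_subset_Icc_self hx)).1
            (hsub (Set.Ioc_subset_Icc_self hx)).2)
          (fun x hx => ((hgD x (hsub hx).2).continuousAt.continuousWithinAt))
          (fun x hx => (hgD x (hsub (Set.Ioc_subset_Icc_self hx)).2).hasDerivWithinAt)
          (fun x hx => hgball x)
          hg0.symm
        exact this ⟨le_refl τ, hle⟩
    have ht1U : t1 ∈ Set.Ioo (t1 - ε) (t1 + ε) := ⟨by linarith, by linarith⟩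
    have hgcon := constraint_prop isOpen_Ioo (convex_Ioo _ _) ht1U hgD (by
      rw [hg0]
      simp only [hfcdef]
      have hc := (hsol t1 ht1).2.2.2.2.2
      simp only [Constraint] at hc
      linarith)
    classical
    set M1 : ℝ → ℝ := fun τ => if τ ∈ I then N1 τ else (g τ).1 with hM1def
    set M2 : ℝ → ℝ := fun τ => if τ ∈ I then N2 τ else (g τ).2.1 with hM2def
    set M3 : ℝ → ℝ := fun τ => if τ ∈ I then N3 τ else (g τ).2.2.1 with hM3def
    set P' : ℝ → ℝ := fun τ => if τ ∈ I then Sp τ else (g τ).2.2.2.1 with hPdef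
    set Q' : ℝ → ℝ := fun τ => if τ ∈ I then Sm τ else (g τ).2.2.2.2 with hQdef
    have hMU : ∀ τ ∈ Set.Ioo (t1 - ε) (t1 + ε), M1 τ = (g τ).1 ∧ M2 τ = (g τ).2.1 ∧
        M3 τ = (g τ).2.2.1 ∧ P' τ = (g τ).2.2.2.1 ∧ Q' τ = (g τ).2.2.2.2 := by
      intro τ hτ
      by_cases hI : τ ∈ I
      · have h := (huniq τ ⟨hI, hτ⟩).symm
        simp only [hM1def, hM2def, hM3def, hPdef, hQdef, if_pos hI, h, hfcdef]
        exact ⟨trivial, trivial, trivial, trivial, trivial⟩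
      · simp only [hM1def, hM2def, hM3def, hPdef, hQdef, if_neg hI]
        exact ⟨trivial, trivial, trivial, trivial, trivial⟩
    have hagree : ∀ τ ∈ I, M1 τ = N1 τ ∧ M2 τ = N2 τ ∧ M3 τ = N3 τ ∧
        P' τ = Sp τ ∧ Q' τ = Sm τ := by
      intro τ hτ
      simp only [hM1def, hM2def, hM3def, hPdef, hQdef, if_pos hτ]
      exact ⟨trivial, trivial, trivial, trivial, trivial⟩
    have hsolM : IsWHSolutionOn M1 M2 M3 P' Q' (I ∪ Set.Ioo (t1 - ε) (t1 + ε)) := by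
      intro τ hτ
      by_cases hI : τ ∈ I
      · obtain ⟨hd1, hd2, hd3, hd4, hd5, hcon⟩ := hsol τ hI
        have hInh : I ∈ nhds τ := hopen.mem_nhds hI
        have he1 : M1 =ᶠ[nhds τ] N1 := by
          filter_upwards [hInh] with x hx; simp only [hM1def, if_pos hx]
        have he2 : M2 =ᶠ[nhds τ] N2 := by
          filter_upwards [hInh] with x hx; simp only [hM2def, if_pos hx]
        have he3 : M3 =ᶠ[nhds τ] N3 := by
          filter_upwards [hInh] with x hx; simp only [hM3def, if_pos hx]
        have he4 : P' =ᶠ[nhds τ] Sp := by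
          filter_upwards [hInh] with x hx; simp only [hPdef, if_pos hx]
        have he5 : Q' =ᶠ[nhds τ] Sm := by
          filter_upwards [hInh] with x hx; simp only [hQdef, if_pos hx]
        obtain ⟨eM1, eM2, eM3, eP, eQ⟩ := hagree τ hI
        refine ⟨?_, ?_, ?_, ?_, ?_, ?_⟩
        · have h := hd1.congr_of_eventuallyEq he1
          have hv : (qq P' Q' τ - 4 * P' τ) * M1 τ = (qq Sp Sm τ - 4 * Sp τ) * N1 τ := by
            simp only [qq, eM1, eP, eQ]
          rw [hv]; exact h
        · have h := hd2.congr_of_eventuallyEq he2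
          have hv : (qq P' Q' τ + 2 * P' τ + 2 * Real.sqrt 3 * Q' τ) * M2 τ =
              (qq Sp Sm τ + 2 * Sp τ + 2 * Real.sqrt 3 * Sm τ) * N2 τ := by
            simp only [qq, eM2, eP, eQ]
          rw [hv]; exact h
        · have h := hd3.congr_of_eventuallyEq he3
          have hv : (qq P' Q' τ + 2 * P' τ - 2 * Real.sqrt 3 * Q' τ) * M3 τ =
              (qq Sp Sm τ + 2 * Sp τ - 2 * Real.sqrt 3 * Sm τ) * N3 τ := by
            simp only [qq, eM3, eP, eQ]
          rw [hv]; exact h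
        · have h := hd4.congr_of_eventuallyEq he4
          have hv : -(2 - qq P' Q' τ) * P' τ - 3 * Spl M1 M2 M3 τ =
              -(2 - qq Sp Sm τ) * Sp τ - 3 * Spl N1 N2 N3 τ := by
            simp only [qq, Spl, eM1, eM2, eM3, eP, eQ]
          rw [hv]; exact h
        · have h := hd5.congr_of_eventuallyEq he5
          have hv : -(2 - qq P' Q' τ) * Q' τ - 3 * Smi M1 M2 M3 τ =
              -(2 - qq Sp Sm τ) * Sm τ - 3 * Smi N1 N2 N3 τ := by
            simp only [qq, Smi, eM1, eM2, eM3, eP, eQ]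
          rw [hv]; exact h
        · simp only [Constraint] at hcon ⊢
          rw [eM1, eM2, eM3, eP, eQ]; exact hcon
      · have hτU : τ ∈ Set.Ioo (t1 - ε) (t1 + ε) := hτ.resolve_left hI
        obtain ⟨e1, e2, e3, e4, e5⟩ := hMU τ hτU
        have hUnh : Set.Ioo (t1 - ε) (t1 + ε) ∈ nhds τ := isOpen_Ioo.mem_nhds hτU
        have he1 : M1 =ᶠ[nhds τ] (fun s => (g s).1) := by
          filter_upwards [hUnh] with x hx; exact (hMU x hx).1
        have he2 : M2 =ᶠ[nhds τ] (fun s => (g s).2.1) := by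
          filter_upwards [hUnh] with x hx; exact (hMU x hx).2.1
        have he3 : M3 =ᶠ[nhds τ] (fun s => (g s).2.2.1) := by
          filter_upwards [hUnh] with x hx; exact (hMU x hx).2.2.1
        have he4 : P' =ᶠ[nhds τ] (fun s => (g s).2.2.2.1) := by
          filter_upwards [hUnh] with x hx; exact (hMU x hx).2.2.2.1
        have he5 : Q' =ᶠ[nhds τ] (fun s => (g s).2.2.2.2) := by
          filter_upwards [hUnh] with x hx; exact (hMU x hx).2.2.2.2
        have hgc := hgD τ hτU
        have h1 := hasDerivAt_fst' hgc
        have h2 := hasDerivAt_fst' (hasDerivAt_snd' hgc)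
        have h3 := hasDerivAt_fst' (hasDerivAt_snd' (hasDerivAt_snd' hgc))
        have h4 := hasDerivAt_fst' (hasDerivAt_snd' (hasDerivAt_snd' (hasDerivAt_snd' hgc)))
        have h5 := hasDerivAt_snd' (hasDerivAt_snd' (hasDerivAt_snd' (hasDerivAt_snd' hgc)))
        refine ⟨?_, ?_, ?_, ?_, ?_, ?_⟩
        · have h := h1.congr_of_eventuallyEq he1
          have hv : (qq P' Q' τ - 4 * P' τ) * M1 τ = (vf (g τ)).1 := by
            simp only [qq, vf, e1, e4, e5]
          rw [hv]; exact h
        · have h := h2.congr_of_eventuallyEq he2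
          have hv : (qq P' Q' τ + 2 * P' τ + 2 * Real.sqrt 3 * Q' τ) * M2 τ =
              (vf (g τ)).2.1 := by
            simp only [qq, vf, e2, e4, e5]
          rw [hv]; exact h
        · have h := h3.congr_of_eventuallyEq he3
          have hv : (qq P' Q' τ + 2 * P' τ - 2 * Real.sqrt 3 * Q' τ) * M3 τ =
              (vf (g τ)).2.2.1 := by
            simp only [qq, vf, e3, e4, e5]
          rw [hv]; exact h
        · have h := h4.congr_of_eventuallyEq he4
          have hv : -(2 - qq P' Q' τ) * P' τ - 3 * Spl M1 M2 M3 τ = (vf (g τ)).2.2.2.1 := by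
            simp only [qq, Spl, vf, e1, e2, e3, e4, e5]
          rw [hv]; exact h
        · have h := h5.congr_of_eventuallyEq he5
          have hv : -(2 - qq P' Q' τ) * Q' τ - 3 * Smi M1 M2 M3 τ = (vf (g τ)).2.2.2.2 := by
            simp only [qq, Smi, vf, e1, e2, e3, e4, e5]
          rw [hv]; exact h
        · simp only [Constraint]
          rw [e1, e2, e3, e4, e5]
          have := hgcon τ hτU
          linarith
    have hJeq := hmax (I ∪ Set.Ioo (t1 - ε) (t1 + ε)) M1 M2 M3 P' Q'
      (hopen.union isOpen_Ioo)
      (hconn.union t1 ht1 ht1U isPreconnected_Ioo)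
      Set.subset_union_left hsolM hagree
    intro x hx
    rw [← hJeq]
    exact Set.subset_union_right hx
  have hunbdd_above : ∀ r : ℝ, ∃ y ∈ I, r < y := by
    intro r
    by_contra hc
    push_neg at hc
    have hbdd : BddAbove I := ⟨r, fun y hy => hc y hy⟩
    set b := sSup I with hbdef
    have hlt : ∀ x ∈ I, x < b := by
      intro x hx
      rcases Metric.isOpen_iff.1 hopen x hx with ⟨δ, hδ, hball⟩
      have hx2 : x + δ / 2 ∈ I := by
        apply hball
        rw [Metric.mem_ball, Real.dist_eq, show x + δ / 2 - x = δ / 2 by ring,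
          abs_of_pos (by linarith)]
        linarith
      have := le_csSup hbdd hx2
      linarith
    obtain ⟨ε, hε, hε1, hE⟩ := hext (|b| + 3) (by positivity)
    have hm : 0 < min (ε / 2) 1 := lt_min (by linarith) one_pos
    obtain ⟨t1, ht1I, ht1gt⟩ := exists_lt_of_lt_csSup ⟨0, h0⟩
      (show b - min (ε / 2) 1 < b by linarith)
    have ht1b : t1 < b := hlt t1 ht1I
    have habs : |t1| + 2 ≤ |b| + 3 := by
      have h1 : t1 ≤ |b| := le_trans ht1b.le (le_abs_self b)
      have h2 : -|b| ≤ b := neg_abs_le b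
      have hm1 : min (ε / 2) 1 ≤ 1 := min_le_right _ _
      have : |t1| ≤ |b| + 1 := abs_le.2 ⟨by linarith, by linarith⟩
      linarith
    have hbmem : b ∈ Set.Ioo (t1 - ε) (t1 + ε) := by
      have hm2 : min (ε / 2) 1 ≤ ε / 2 := min_le_left _ _
      exact ⟨by linarith, by linarith⟩
    exact absurd (hE t1 ht1I habs hbmem) (fun h => lt_irrefl b (hlt b h))
  have hunbdd_below : ∀ r : ℝ, ∃ y ∈ I, y < r := by
    intro r
    by_contra hc
    push_neg at hc
    have hbdd : BddBelow I := ⟨r, fun y hy => hc y hy⟩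
    set b := sInf I with hbdef
    have hlt : ∀ x ∈ I, b < x := by
      intro x hx
      rcases Metric.isOpen_iff.1 hopen x hx with ⟨δ, hδ, hball⟩
      have hx2 : x - δ / 2 ∈ I := by
        apply hball
        rw [Metric.mem_ball, Real.dist_eq, show x - δ / 2 - x = -(δ / 2) by ring, abs_neg,
          abs_of_pos (by linarith)]
        linarith
      have := csInf_le hbdd hx2
      linarith
    obtain ⟨ε, hε, hε1, hE⟩ := hext (|b| + 3) (by positivity)
    have hm : 0 < min (ε / 2) 1 := lt_min (by linarith) one_pos
    obtain ⟨t1, ht1I, ht1lt⟩ := exists_lt_of_csInf_lt ⟨0, h0⟩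
      (show b < b + min (ε / 2) 1 by linarith)
    have ht1b : b < t1 := hlt t1 ht1I
    have habs : |t1| + 2 ≤ |b| + 3 := by
      have h1 : -|b| ≤ b := neg_abs_le b
      have h2 : b ≤ |b| := le_abs_self b
      have hm1 : min (ε / 2) 1 ≤ 1 := min_le_right _ _
      have : |t1| ≤ |b| + 1 := abs_le.2 ⟨by linarith, by linarith⟩
      linarith
    have hbmem : b ∈ Set.Ioo (t1 - ε) (t1 + ε) := by
      have hm2 : min (ε / 2) 1 ≤ ε / 2 := min_le_left _ _
      exact ⟨by linarith, by linarith⟩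
    exact absurd (hE t1 ht1I habs hbmem) (fun h => lt_irrefl b (hlt b h))
  apply Set.eq_univ_of_forall
  intro x
  obtain ⟨y, hy, hxy⟩ := hunbdd_above x
  obtain ⟨z, hz, hzx⟩ := hunbdd_below x
  exact hord.out hz hy ⟨hzx.le, hxy.le⟩
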